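/- Let m ≥ 1 and let S ⊆ Δ_m be nonempty and contain at least one point (t_0,…,t_m) with max_i t_i < 1. Let U be a convex open subset of ℝ^d and let h : U → ℝ be Lebesgue measurable and S-almost convex. Then h is bounded above and bounded below on every compact subset of U. -/

import Mathlib

open scoped BigOperators

/-- `h` is `S`-almost convex on the convex set `C`. -/
def SAlmostConvex {V : Type*} [AddCommGroup V] [Module ℝ V] {m : ℕ}
    (S : Set (Fin (m + 1) → ℝ)) (C : Set V) (h : V → ℝ) : Prop :=
  ∀ t ∈ S, ∀ x : Fin (m + 1) → V, (∀ i, x i ∈ C) →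
    h (∑ i, t i • x i) ≤ 1 + ∑ i, t i * h (x i)

open MeasureTheory Metric Set Filter
open scoped ENNReal Topology

lemma sum_ite_smul {M : Type*} [AddCommGroup M] [Module ℝ M] {n : ℕ} (t : Fin n → ℝ)
    (ht : ∑ i, t i = 1) (j : Fin n) (x y : M) :
    ∑ i, t i • (if i = j then y else x) = (1 - t j) • x + t j • y := by
  classical
  rw [← Finset.sum_erase_add _ _ (Finset.mem_univ j)]
  have h1 : ∑ i ∈ Finset.univ.erase j, t i • (if i = j then y else x)
      = (∑ i ∈ Finset.univ.erase j, t i) • x := by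
    rw [Finset.sum_smul]
    exact Finset.sum_congr rfl fun i hi => by
      rw [if_neg (Finset.mem_erase.1 hi).1]
  have h2 : ∑ i ∈ Finset.univ.erase j, t i = 1 - t j := by
    have := Finset.sum_erase_add Finset.univ t (Finset.mem_univ j)
    rw [ht] at this; linarith
  rw [h1, h2, if_pos rfl]


lemma exists_good_set {d : ℕ} {U : Set (Fin d → ℝ)} (hU : MeasurableSet U)
    {h : (Fin d → ℝ) → ℝ} (hmeas : NullMeasurable h (volume.restrict U))
    {B : Set (Fin d → ℝ)} (hBm : MeasurableSet B) (hBU : B ⊆ U)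
    (hBfin : volume B ≠ ⊤) {η : ℝ≥0∞} (hη : 0 < η) :
    ∃ (A : Set (Fin d → ℝ)) (M : ℝ), MeasurableSet A ∧ A ⊆ B ∧
      (∀ x ∈ A, h x ≤ M) ∧ volume (B \ A) < η := by
  have hae : AEMeasurable h (volume.restrict U) := hmeas.aemeasurable
  set g := hae.mk h with hg
  have hgm : Measurable g := hae.measurable_mk
  have heq : h =ᵐ[volume.restrict U] g := hae.ae_eq_mk
  have hN0 : volume ({x | h x ≠ g x} ∩ U) = 0 := by
    have : (volume.restrict U) {x | h x ≠ g x} = 0 := heq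
    rwa [Measure.restrict_apply' hU] at this
  set N := toMeasurable volume ({x | h x ≠ g x} ∩ U) with hNdef
  have hNm : MeasurableSet N := measurableSet_toMeasurable _ _
  have hNnull : volume N = 0 := by rw [hNdef, measure_toMeasurable]; exact hN0
  have hNsub : {x | h x ≠ g x} ∩ U ⊆ N := subset_toMeasurable _ _
  set A : ℕ → Set (Fin d → ℝ) := fun n => (B ∩ {x | g x ≤ (n : ℝ)}) \ N with hAdef
  have hAm : ∀ n, MeasurableSet (A n) := fun n =>
    ((hBm.inter (hgm measurableSet_Iic)).diff hNm)
  have hAB : ∀ n, A n ⊆ B := fun n x hx => hx.1.1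
  have hAh : ∀ n, ∀ x ∈ A n, h x ≤ (n : ℝ) := by
    intro n x hx
    have hxU : x ∈ U := hBU hx.1.1
    have : h x = g x := by
      by_contra hc
      exact hx.2 (hNsub ⟨hc, hxU⟩)
    rw [this]; exact hx.1.2
  rcases eq_top_or_lt_top η with rfl | hηtop
  · exact ⟨A 0, 0, hAm 0, hAB 0, by simpa using hAh 0,
      lt_of_le_of_lt (measure_mono (diff_subset)) hBfin.lt_top⟩
  rcases eq_or_ne (volume B) 0 with hB0 | hB0
  · exact ⟨A 0, 0, hAm 0, hAB 0, by simpa using hAh 0,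
      by rw [measure_mono_null diff_subset hB0]; exact hη⟩
  rcases le_or_gt η (volume B) with hηB | hηB
  swap
  · exact ⟨A 0, 0, hAm 0, hAB 0, by simpa using hAh 0,
      lt_of_le_of_lt (measure_mono diff_subset) hηB⟩
  have hmono : Monotone A := by
    intro i j hij x hx
    refine ⟨⟨hx.1.1, ?_⟩, hx.2⟩
    show g x ≤ (j : ℝ)
    exact le_trans (show g x ≤ (i : ℝ) from hx.1.2) (Nat.cast_le.2 hij)
  have hsub : B \ N ⊆ ⋃ n, A n := by
    intro x hx
    obtain ⟨n, hn⟩ := exists_nat_ge (g x)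
    exact Set.mem_iUnion.2 ⟨n, ⟨hx.1, hn⟩, hx.2⟩
  have hUnion : volume B ≤ volume (⋃ n, A n) := by
    calc volume B = volume (B \ N) := (measure_diff_null hNnull).symm
      _ ≤ _ := measure_mono hsub
  have htend : Tendsto (fun n => volume (A n)) atTop (𝓝 (volume (⋃ n, A n))) :=
    tendsto_measure_iUnion_atTop hmono
  have hlt : volume B - η < volume (⋃ n, A n) :=
    lt_of_lt_of_le (ENNReal.sub_lt_self hBfin hB0 hη.ne') hUnion
  obtain ⟨n, hn⟩ := (htend.eventually (Ioi_mem_nhds hlt)).exists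
  refine ⟨A n, n, hAm n, hAB n, hAh n, ?_⟩
  have hdiff : volume (B \ A n) = volume B - volume (A n) :=
    measure_diff (hAB n) (hAm n).nullMeasurableSet
      (ne_top_of_le_ne_top hBfin (measure_mono (hAB n)))
  rw [hdiff]
  rw [ENNReal.sub_lt_iff_lt_right (ne_top_of_le_ne_top hBfin (measure_mono (hAB n)))
    (measure_mono (hAB n))]
  calc volume B = volume B - η + η := (tsub_add_cancel_of_le hηB).symm
    _ < volume (A n) + η := by
        exact ENNReal.add_lt_add_right hηtop.ne (by exact hn)
    _ = η + volume (A n) := add_comm _ _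


lemma local_ub {d : ℕ} {α : ℝ} (hα0 : 0 < α) (hα1 : α < 1) {U : Set (Fin d → ℝ)}
    (hUopen : IsOpen U) {h : (Fin d → ℝ) → ℝ}
    (hmeas : NullMeasurable h (volume.restrict U))
    (key : ∀ x ∈ U, ∀ y ∈ U, h ((1 - α) • x + α • y) ≤ 1 + (1 - α) * h x + α * h y)
    {z : Fin d → ℝ} (hz : z ∈ U) :
    ∃ ε > 0, Metric.ball z ε ⊆ U ∧ ∃ M : ℝ, ∀ w ∈ Metric.ball z ε, h w ≤ M := by
  obtain ⟨r, hr0, hrU⟩ : ∃ r > 0, closedBall z r ⊆ U :=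
    (Metric.nhds_basis_closedBall.mem_iff).1 (hUopen.mem_nhds hz)
  have h1α : (0:ℝ) < 1 - α := by linarith
  set β : ℝ := (1 - α) / α with hβdef
  have hβ0 : 0 < β := div_pos h1α hα0
  have hβ1 : β + 1 = α⁻¹ := by rw [hβdef]; field_simp; ring
  have hαβ : α * β = 1 - α := by rw [hβdef]; field_simp
  set s : ℝ := min r (r * α / (2 * (1 - α))) with hsdef
  have hs0 : 0 < s := lt_min hr0 (by positivity)
  have hsr : s ≤ r := min_le_left _ _
  have hsβ : β * s ≤ r / 2 := by
    calc β * s ≤ β * (r * α / (2 * (1 - α))) :=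
          mul_le_mul_of_nonneg_left (min_le_right _ _) hβ0.le
      _ = r / 2 := by rw [hβdef]; field_simp
  set B : Set (Fin d → ℝ) := closedBall z r with hBdef
  set B₀ : Set (Fin d → ℝ) := closedBall z s with hB₀def
  have hB₀B : B₀ ⊆ B := closedBall_subset_closedBall hsr
  have hBU : B ⊆ U := hrU
  have hB₀pos : 0 < volume B₀ := measure_closedBall_pos _ _ hs0
  have hB₀fin : volume B₀ ≠ ⊤ := measure_closedBall_lt_top.ne
  have hBfin : volume B ≠ ⊤ := measure_closedBall_lt_top.ne
  set c : ℝ≥0∞ := ENNReal.ofReal |((-β) ^ d)⁻¹| with hcdef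
  have hcfin : c ≠ ⊤ := ENNReal.ofReal_ne_top
  set η : ℝ≥0∞ := volume B₀ / (2 * (1 + c)) with hηdef
  have hdenfin : (2 * (1 + c)) ≠ ⊤ := by
    exact ENNReal.mul_ne_top (by norm_num) (by simp [hcfin])
  have hη0 : 0 < η := ENNReal.div_pos hB₀pos.ne' hdenfin
  have harith : η + c * η < volume B₀ := by
    have h1 : η + c * η = (1 + c) * η := by ring
    have h2 : (1 + c) * η = volume B₀ / 2 := by
      rw [hηdef, div_eq_mul_inv, ENNReal.mul_inv (Or.inl (by norm_num)) (Or.inl (by norm_num))]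
      have hc0 : (1 + c) ≠ 0 := by simp
      have hc1 : (1 + c) ≠ ⊤ := by simp [hcfin]
      calc (1 + c) * (volume B₀ * (2⁻¹ * (1 + c)⁻¹))
          = volume B₀ * 2⁻¹ * ((1 + c) * (1 + c)⁻¹) := by ring
        _ = volume B₀ / 2 := by
            rw [ENNReal.mul_inv_cancel hc0 hc1, mul_one, div_eq_mul_inv]
    rw [h1, h2]
    exact ENNReal.half_lt_self hB₀pos.ne' hB₀fin
  obtain ⟨A, M, hAm, hAB, hAh, hAμ⟩ :=
    exists_good_set hUopen.measurableSet hmeas measurableSet_closedBall hBU hBfin hη0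
  set ε : ℝ := α * r / 2 with hεdef
  have hε0 : 0 < ε := by positivity
  have hεr : ε < r := by nlinarith
  have hεU : Metric.ball z ε ⊆ U := fun x hx =>
    hBU (le_of_lt (lt_of_lt_of_le (mem_ball.1 hx) hεr.le) : dist x z ≤ r)
  refine ⟨ε, hε0, hεU, 1 + M, fun w hw => ?_⟩
  set φ : (Fin d → ℝ) → (Fin d → ℝ) := fun x => α⁻¹ • w + (-β) • x with hφdef
  have hφcomb : ∀ x, (1 - α) • x + α • φ x = w := by
    intro x
    rw [hφdef]
    simp only [smul_add, smul_smul, mul_inv_cancel₀ hα0.ne', one_smul]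
    have : α * -β = -(1 - α) := by rw [mul_neg, hαβ]
    rw [this]
    module
  have hφB : ∀ x ∈ B₀, φ x ∈ B := by
    intro x hx
    have hd1 : dist (φ x) (φ z) = β * dist x z := by
      rw [dist_eq_norm]
      have : φ x - φ z = (-β) • (x - z) := by rw [hφdef]; module
      rw [this, norm_smul, dist_eq_norm]
      simp [abs_of_pos hβ0]
    have hd2 : dist (φ z) z = α⁻¹ * dist w z := by
      rw [dist_eq_norm]
      have : φ z - z = α⁻¹ • (w - z) := by
        rw [hφdef, ← hβ1]; module
      rw [this, norm_smul, dist_eq_norm, Real.norm_eq_abs, abs_of_pos (inv_pos.2 hα0)]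
    have hwz : dist w z < ε := mem_ball.1 hw
    have : dist (φ x) z ≤ dist (φ x) (φ z) + dist (φ z) z := dist_triangle _ _ _
    have hxz : dist x z ≤ s := mem_closedBall.1 hx
    have hb1 : dist (φ x) (φ z) ≤ r / 2 := by
      rw [hd1]
      calc β * dist x z ≤ β * s := mul_le_mul_of_nonneg_left hxz hβ0.le
        _ ≤ r / 2 := hsβ
    have hb2 : dist (φ z) z < r / 2 := by
      rw [hd2]
      calc α⁻¹ * dist w z < α⁻¹ * ε := mul_lt_mul_of_pos_left hwz (inv_pos.2 hα0)
        _ = r / 2 := by rw [hεdef]; field_simp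
    exact mem_closedBall.2 (by linarith)
  set A₁ : Set (Fin d → ℝ) := A ∩ B₀ with hA₁def
  set A₂ : Set (Fin d → ℝ) := φ ⁻¹' A ∩ B₀ with hA₂def
  have hm1 : volume (B₀ \ A₁) ≤ η := by
    refine le_trans (measure_mono ?_) hAμ.le
    intro x hx
    exact ⟨hB₀B hx.1, fun hxA => hx.2 ⟨hxA, hx.1⟩⟩
  have hm2 : volume (B₀ \ A₂) ≤ c * η := by
    have hsub : B₀ \ A₂ ⊆ φ ⁻¹' (B \ A) := by
      intro x hx
      exact ⟨hφB x hx.1, fun hxA => hx.2 ⟨hxA, hx.1⟩⟩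
    have hpre : volume (φ ⁻¹' (B \ A)) = c * volume (B \ A) := by
      have hcomp : φ ⁻¹' (B \ A) = ((-β) • ·) ⁻¹' ((α⁻¹ • w + ·) ⁻¹' (B \ A)) := rfl
      rw [hcomp, Measure.addHaar_preimage_smul volume (neg_ne_zero.2 hβ0.ne') _,
        measure_preimage_add]
      congr 2
      simp [hcdef]
    calc volume (B₀ \ A₂) ≤ volume (φ ⁻¹' (B \ A)) := measure_mono hsub
      _ = c * volume (B \ A) := hpre
      _ ≤ c * η := mul_le_mul_right hAμ.le c
  have hne : volume (A₁ ∩ A₂) ≠ 0 := by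
    intro h0
    have hcover : B₀ ⊆ (A₁ ∩ A₂) ∪ ((B₀ \ A₁) ∪ (B₀ \ A₂)) := by
      intro x hx
      by_cases h1 : x ∈ A₁
      · by_cases h2 : x ∈ A₂
        · exact Or.inl ⟨h1, h2⟩
        · exact Or.inr (Or.inr ⟨hx, h2⟩)
      · exact Or.inr (Or.inl ⟨hx, h1⟩)
    have : volume B₀ ≤ volume (A₁ ∩ A₂) + (volume (B₀ \ A₁) + volume (B₀ \ A₂)) :=
      le_trans (measure_mono hcover) (le_trans (measure_union_le _ _)
        (add_le_add_right (measure_union_le _ _) _))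
    rw [h0, zero_add] at this
    have : volume B₀ ≤ η + c * η := le_trans this (add_le_add hm1 hm2)
    exact absurd (lt_of_le_of_lt this harith) (lt_irrefl _)
  obtain ⟨x, hx⟩ := nonempty_of_measure_ne_zero hne
  have hxA : x ∈ A := hx.1.1
  have hφxA : φ x ∈ A := hx.2.1
  have hxU : x ∈ U := hBU (hAB hxA)
  have hφxU : φ x ∈ U := hBU (hAB hφxA)
  have := key x hxU (φ x) hφxU
  rw [hφcomb x] at this
  have h1 : h x ≤ M := hAh x hxA
  have h2 : h (φ x) ≤ M := hAh _ hφxA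
  nlinarith [mul_le_mul_of_nonneg_left h1 h1α.le, mul_le_mul_of_nonneg_left h2 hα0.le]


lemma local_bd {d : ℕ} {α : ℝ} (hα0 : 0 < α) (hα1 : α < 1) {U : Set (Fin d → ℝ)}
    (hUopen : IsOpen U) {h : (Fin d → ℝ) → ℝ}
    (hmeas : NullMeasurable h (volume.restrict U))
    (key : ∀ x ∈ U, ∀ y ∈ U, h ((1 - α) • x + α • y) ≤ 1 + (1 - α) * h x + α * h y)
    {z : Fin d → ℝ} (hz : z ∈ U) :
    ∃ ρ > 0, ∃ a b : ℝ, ∀ x ∈ Metric.ball z ρ, a ≤ h x ∧ h x ≤ b := by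
  obtain ⟨ε, hε0, hεU, M, hM⟩ := local_ub hα0 hα1 hUopen hmeas key hz
  have h1α : (0:ℝ) < 1 - α := by linarith
  set γ : ℝ := α / (1 - α) with hγdef
  have hγ0 : 0 < γ := div_pos hα0 h1α
  set ρ : ℝ := min ε ((1 - α) * ε / α) with hρdef
  have hρ0 : 0 < ρ := lt_min hε0 (by positivity)
  refine ⟨ρ, hρ0, (h z - 1 - (1 - α) * M) / α, M, fun x hx => ?_⟩
  have hxε : x ∈ Metric.ball z ε := ball_subset_ball (min_le_left _ _) hx
  have hxU : x ∈ U := hεU hxε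
  set y : Fin d → ℝ := (1 - α)⁻¹ • z + (-γ) • x with hydef
  have hcomb : (1 - α) • y + α • x = z := by
    rw [hydef]
    simp only [smul_add, smul_smul, mul_inv_cancel₀ h1α.ne', one_smul]
    have : (1 - α) * -γ = -α := by
      rw [hγdef, mul_neg]; field_simp
    rw [this]
    module
  have hyz : dist y z = γ * dist x z := by
    rw [dist_eq_norm, dist_eq_norm]
    have : y - z = γ • (z - x) := by
      rw [hydef]
      have h1 : (1 - α)⁻¹ = γ + 1 := by rw [hγdef]; field_simp; ring
      rw [h1]
      module
    rw [this, norm_smul, Real.norm_eq_abs, abs_of_pos hγ0, norm_sub_rev]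
  have hyε : y ∈ Metric.ball z ε := by
    rw [mem_ball, hyz]
    calc γ * dist x z < γ * ρ := mul_lt_mul_of_pos_left (mem_ball.1 hx) hγ0
      _ ≤ γ * ((1 - α) * ε / α) := mul_le_mul_of_nonneg_left (min_le_right _ _) hγ0.le
      _ = ε := by rw [hγdef]; field_simp
  have hyU : y ∈ U := hεU hyε
  have hkey := key y hyU x hxU
  rw [hcomb] at hkey
  have hyM : h y ≤ M := hM y hyε
  constructor
  · rw [div_le_iff₀ hα0]
    nlinarith [mul_le_mul_of_nonneg_left hyM h1α.le]
  · exact hM x hxε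

theorem stmt1 {d : ℕ} {m : ℕ} (hm : 1 ≤ m)
    (S : Set (Fin (m + 1) → ℝ)) (hSne : S.Nonempty)
    (hSsub : S ⊆ stdSimplex ℝ (Fin (m + 1)))
    (hSpt : ∃ t ∈ S, ∀ i, t i < 1)
    (U : Set (Fin d → ℝ)) (hUconv : Convex ℝ U) (hUopen : IsOpen U)
    (h : (Fin d → ℝ) → ℝ)
    (hmeas : MeasureTheory.NullMeasurable h
      (MeasureTheory.volume.restrict U))
    (hac : SAlmostConvex S U h) :
    ∀ K ⊆ U, IsCompact K → ∃ a b : ℝ, ∀ x ∈ K, a ≤ h x ∧ h x ≤ b := by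
  obtain ⟨α, hα0, hα1, key⟩ : ∃ α : ℝ, 0 < α ∧ α < 1 ∧ ∀ x ∈ U, ∀ y ∈ U,
      h ((1 - α) • x + α • y) ≤ 1 + (1 - α) * h x + α * h y := by
    obtain ⟨t, htS, htlt⟩ := hSpt
    obtain ⟨htnn, htsum⟩ := hSsub htS
    obtain ⟨j, hj⟩ : ∃ j, t j ≠ 0 := by
      by_contra hc
      push_neg at hc
      simp [hc] at htsum
    refine ⟨t j, (htnn j).lt_of_ne (Ne.symm hj), htlt j, fun x hx y hy => ?_⟩
    have := hac t htS (fun i => if i = j then y else x)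
      (fun i => by split <;> assumption)
    rw [sum_ite_smul t htsum j x y] at this
    calc h ((1 - t j) • x + t j • y) ≤ 1 + ∑ i, t i * h (if i = j then y else x) := this
      _ = 1 + ((1 - t j) * h x + t j * h y) := by
          congr 1
          have := sum_ite_smul (M := ℝ) t htsum j (h x) (h y)
          simpa [smul_eq_mul, apply_ite h] using this
      _ = 1 + (1 - t j) * h x + t j * h y := by ring
  intro K hKU hK
  choose! ρ hρ0 a b hbd using fun (z : Fin d → ℝ) (hz : z ∈ K) =>
    local_bd hα0 hα1 hUopen hmeas key (hKU hz)
  obtain ⟨t, htcover⟩ := hK.elim_nhds_subcover' (fun z hz => Metric.ball z (ρ z))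
    (fun z hz => ball_mem_nhds _ (hρ0 z hz))
  rcases t.eq_empty_or_nonempty with rfl | htne
  · refine ⟨0, 0, fun x hx => absurd (htcover hx) (by simp)⟩
  · refine ⟨t.inf' htne (fun z => a z), t.sup' htne (fun z => b z), fun x hx => ?_⟩
    obtain ⟨z, hzt, hxball⟩ : ∃ z ∈ t, x ∈ Metric.ball (z : Fin d → ℝ) (ρ z) := by
      simpa using htcover hx
    obtain ⟨h1, h2⟩ := hbd z z.2 x hxball
    have hlow : t.inf' htne (fun z => a (z : Fin d → ℝ)) ≤ a z := by apply Finset.inf'_le (fun w : ↥K => a w) hzt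
    have hup : b z ≤ t.sup' htne (fun z => b (z : Fin d → ℝ)) := by apply Finset.le_sup' (fun w : ↥K => b w) hzt
    exact ⟨le_trans hlow h1, le_trans h2 hup⟩
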